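/- arXiv:2210.15782 — 2 statements merged into one kernel-verified Lean document; each statement's English description precedes it below -/
import Mathlib

section
/- For k = 2, the infimum over β ∈ [1/2, 1) of (k − (1−β)·min(3/(2−β), 3/(3β−1)))/(β + k/2 − 1) equals 1 + √3/2 and is attained at β = √3 − 1. -/
theorem inf_second_exponent_weight_two :
    sInf {y : ℝ | ∃ β : ℝ, 1 / 2 ≤ β ∧ β < 1 ∧
        y = ((2 : ℝ) - (1 - β) * min (3 / (2 - β)) (3 / (3 * β - 1))) / (β + 2 / 2 - 1)} =
      1 + Real.sqrt 3 / 2 ∧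
    ((2 : ℝ) - (1 - (Real.sqrt 3 - 1)) *
        min (3 / (2 - (Real.sqrt 3 - 1))) (3 / (3 * (Real.sqrt 3 - 1) - 1))) /
      ((Real.sqrt 3 - 1) + 2 / 2 - 1) = 1 + Real.sqrt 3 / 2 := by
  set s := Real.sqrt 3 with hs
  have hs2 : s ^ 2 = 3 := Real.sq_sqrt (by norm_num)
  have hs0 : 0 ≤ s := Real.sqrt_nonneg 3
  have hslb : 3/2 < s := by nlinarith
  have hsub : s < 2 := by nlinarith
  have hval : ((2 : ℝ) - (1 - (s - 1)) *
        min (3 / (2 - (s - 1))) (3 / (3 * (s - 1) - 1))) /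
      ((s - 1) + 2 / 2 - 1) = 1 + s / 2 := by
    have hmin : min (3 / (2 - (s - 1))) (3 / (3 * (s - 1) - 1)) = 3 / (2 - (s - 1)) := by
      apply min_eq_left
      rw [div_le_div_iff₀ (by nlinarith) (by nlinarith)]
      nlinarith
    rw [hmin]
    rw [div_eq_iff (by nlinarith)]
    have h1 : (2 : ℝ) - (s - 1) ≠ 0 := by nlinarith
    field_simp
    nlinarith
  constructor
  · apply IsLeast.csInf_eq
    constructor
    · exact ⟨s - 1, by nlinarith, by nlinarith, hval.symm⟩
    · rintro y ⟨β, hβ1, hβ2, rfl⟩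
      have hβ0 : 0 < β := by linarith
      have hd : β + 2 / 2 - 1 = β := by ring
      rw [hd]
      rcases le_total β (3/4) with hc | hc
      · have hmin : min (3 / (2 - β)) (3 / (3 * β - 1)) = 3 / (2 - β) := by
          apply min_eq_left
          rw [div_le_div_iff₀ (by linarith) (by linarith)]
          nlinarith
        rw [hmin]
        have hexpr : ((2 : ℝ) - (1 - β) * (3 / (2 - β))) / β = (1 + β) / (β * (2 - β)) := by
          have h1 : (2:ℝ) - β ≠ 0 := by linarith
          have h2 : β ≠ 0 := ne_of_gt hβ0
          field_simp
          ring
        rw [hexpr, le_div_iff₀ (by nlinarith)]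
        nlinarith [sq_nonneg (β - (s - 1))]
      · have hmin : min (3 / (2 - β)) (3 / (3 * β - 1)) = 3 / (3 * β - 1) := by
          apply min_eq_right
          rw [div_le_div_iff₀ (by linarith) (by linarith)]
          nlinarith
        rw [hmin]
        have hexpr : ((2 : ℝ) - (1 - β) * (3 / (3 * β - 1))) / β
            = (9 * β - 5) / (β * (3 * β - 1)) := by
          have h1 : 3 * β - 1 ≠ 0 := by linarith
          have h2 : β ≠ 0 := ne_of_gt hβ0
          have h3 : β * 3 - 1 ≠ 0 := by linarith
          field_simp
          ring
        rw [hexpr, le_div_iff₀ (by nlinarith)]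
        nlinarith [mul_nonneg (by linarith : (0:ℝ) ≤ 1 - β) (by linarith : (0:ℝ) ≤ β - 3/4)]
  · exact hval
end

section
/- For every even integer k ≥ 4, the infimum over β ∈ [1/2, 1) of (k − (1−β)·min(3/(2−β), 3/(3β−1)))/(β + k/2 − 1) equals 2(1 − 1/(10k−5)) and is attained at β = 3/4. -/
theorem inf_second_exponent_higher_weight (k : ℕ) (hk : Even k) (hk4 : 4 ≤ k) :
    sInf {y : ℝ | ∃ β : ℝ, 1 / 2 ≤ β ∧ β < 1 ∧
        y = ((k : ℝ) - (1 - β) * min (3 / (2 - β)) (3 / (3 * β - 1))) / (β + (k : ℝ) / 2 - 1)} =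
      2 * (1 - 1 / (10 * (k : ℝ) - 5)) ∧
    ((k : ℝ) - (1 - (3 / 4 : ℝ)) * min (3 / (2 - (3 / 4 : ℝ))) (3 / (3 * (3 / 4 : ℝ) - 1))) /
        ((3 / 4 : ℝ) + (k : ℝ) / 2 - 1) = 2 * (1 - 1 / (10 * (k : ℝ) - 5)) := by
  have hK : (4 : ℝ) ≤ (k : ℝ) := by exact_mod_cast hk4
  have h105 : (0 : ℝ) < 10 * (k : ℝ) - 5 := by linarith
  have hc : 2 * (1 - 1 / (10 * (k : ℝ) - 5)) = (20 * (k : ℝ) - 12) / (10 * (k : ℝ) - 5) := by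
    field_simp; ring
  have hval : ((k : ℝ) - (1 - (3 / 4 : ℝ)) * min (3 / (2 - (3 / 4 : ℝ))) (3 / (3 * (3 / 4 : ℝ) - 1))) /
        ((3 / 4 : ℝ) + (k : ℝ) / 2 - 1) = 2 * (1 - 1 / (10 * (k : ℝ) - 5)) := by
    rw [show min (3 / (2 - (3 / 4 : ℝ))) (3 / (3 * (3 / 4 : ℝ) - 1)) = 12 / 5 by norm_num]
    rw [hc, div_eq_div_iff (by linarith : (3 / 4 : ℝ) + (k : ℝ) / 2 - 1 ≠ 0) (ne_of_gt h105)]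
    ring
  refine ⟨?_, hval⟩
  -- main lower bound
  have key : ∀ β : ℝ, 1 / 2 ≤ β → β < 1 →
      2 * (1 - 1 / (10 * (k : ℝ) - 5)) ≤
        ((k : ℝ) - (1 - β) * min (3 / (2 - β)) (3 / (3 * β - 1))) / (β + (k : ℝ) / 2 - 1) := by
    intro β hβ1 hβ2
    have hD : (0 : ℝ) < β + (k : ℝ) / 2 - 1 := by linarith
    rw [hc]
    rcases le_or_gt β (3 / 4) with hb | hb
    · have h2β : (0 : ℝ) < 2 - β := by linarith
      have h3β : (0 : ℝ) < 3 * β - 1 := by linarith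
      have hmin : min (3 / (2 - β)) (3 / (3 * β - 1)) = 3 / (2 - β) := by
        apply min_eq_left
        rw [div_le_div_iff₀ h2β h3β]; nlinarith
      have hrw : ((k:ℝ) - (1 - β) * (3 / (2 - β))) / (β + (k:ℝ)/2 - 1)
          = ((k:ℝ) * (2 - β) - (3 - 3 * β)) / ((2 - β) * (β + (k:ℝ)/2 - 1)) := by
        rw [div_eq_div_iff (ne_of_gt hD) (ne_of_gt (mul_pos h2β hD))]
        field_simp
      rw [hmin, hrw, div_le_div_iff₀ h105 (mul_pos h2β hD)]
      nlinarith [mul_nonneg (by linarith : (0:ℝ) ≤ 3/4 - β)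
          (by nlinarith : (0:ℝ) ≤ 16 * (k:ℝ) - 12 - (20 * (k:ℝ) - 12) * β)]
    · have h2β : (0 : ℝ) < 2 - β := by linarith
      have h3β : (0 : ℝ) < 3 * β - 1 := by linarith
      have hmin : min (3 / (2 - β)) (3 / (3 * β - 1)) = 3 / (3 * β - 1) := by
        apply min_eq_right
        rw [div_le_div_iff₀ h3β h2β]; nlinarith
      have hrw : ((k:ℝ) - (1 - β) * (3 / (3 * β - 1))) / (β + (k:ℝ)/2 - 1)
          = ((k:ℝ) * (3 * β - 1) - (3 - 3 * β)) / ((3 * β - 1) * (β + (k:ℝ)/2 - 1)) := by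
        rw [div_eq_div_iff (ne_of_gt hD) (ne_of_gt (mul_pos h3β hD))]
        rw [← mul_assoc, sub_mul, mul_assoc (1 - β), div_mul_cancel₀ _ (ne_of_gt h3β)]
        ring
      rw [hmin, hrw, div_le_div_iff₀ h105 (mul_pos h3β hD)]
      nlinarith [mul_nonneg (by linarith : (0:ℝ) ≤ β - 3/4)
          (by nlinarith : (0:ℝ) ≤ 68 * (k:ℝ) - 36 - (60 * (k:ℝ) - 36) * β)]
  have hmem : 2 * (1 - 1 / (10 * (k : ℝ) - 5)) ∈ {y : ℝ | ∃ β : ℝ, 1 / 2 ≤ β ∧ β < 1 ∧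
        y = ((k : ℝ) - (1 - β) * min (3 / (2 - β)) (3 / (3 * β - 1))) / (β + (k : ℝ) / 2 - 1)} :=
    ⟨3 / 4, by norm_num, by norm_num, hval.symm⟩
  apply le_antisymm
  · exact csInf_le ⟨_, fun y ⟨β, h1, h2, hy⟩ => hy ▸ key β h1 h2⟩ hmem
  · exact le_csInf ⟨_, hmem⟩ fun y ⟨β, h1, h2, hy⟩ => hy ▸ key β h1 h2
end
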